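/- arXiv:2210.00253 — 3 statements merged into one kernel-verified Lean document; each statement's English description precedes it below -/
import Mathlib

section
/- Let V be a finite-dimensional real inner product space, J : V → ℝ^m linear with adjoint J*, λ > 0, F ∈ ℝ^m, g := J* F (assume g ≠ 0), and θ(s) = ‖F + Js‖² + λ‖s‖². Then the minimizer s* of θ satisfies θ(0) − θ(s*) ≥ ‖g‖² / (‖J‖² + λ), where ‖J‖ is the operator norm of J. -/
open RealInnerProductSpace

theorem stmt_1 {V : Type*} [NormedAddCommGroup V] [InnerProductSpace ℝ V]
    [FiniteDimensional ℝ V] {m : ℕ}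
    (J : V →L[ℝ] EuclideanSpace ℝ (Fin m)) (lam : ℝ) (hlam : 0 < lam)
    (F : EuclideanSpace ℝ (Fin m)) (g : V)
    (hg : g = (ContinuousLinearMap.adjoint J) F) (hg0 : g ≠ 0)
    (θ : V → ℝ) (hθ : ∀ s : V, θ s = ‖F + J s‖ ^ 2 + lam * ‖s‖ ^ 2)
    (sstar : V) (hmin : ∀ t : V, θ sstar ≤ θ t) :
    θ 0 - θ sstar ≥ ‖g‖ ^ 2 / (‖J‖ ^ 2 + lam) := by
  set A : ℝ := ‖J‖ ^ 2 + lam with hA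
  have hApos : 0 < A := by positivity
  set c : ℝ := 1 / A with hc
  have hcpos : 0 < c := by positivity
  have hJg : ⟪F, J g⟫ = ‖g‖ ^ 2 := by
    rw [← ContinuousLinearMap.adjoint_inner_left, ← hg, real_inner_self_eq_norm_sq]
  have hJgle : ‖J g‖ ≤ ‖J‖ * ‖g‖ := J.le_opNorm g
  have h0 : θ 0 = ‖F‖ ^ 2 := by rw [hθ]; simp
  have ht : θ ((-c) • g)
      = ‖F‖ ^ 2 - 2 * c * ‖g‖ ^ 2 + c ^ 2 * ‖J g‖ ^ 2 + lam * (c ^ 2 * ‖g‖ ^ 2) := by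
    rw [hθ, map_smul, norm_add_sq_real, inner_smul_right, hJg, norm_smul, norm_smul]
    simp only [norm_neg, Real.norm_eq_abs, mul_pow, sq_abs]
    ring
  have hkey : θ 0 - θ ((-c) • g) ≥ c * ‖g‖ ^ 2 := by
    rw [h0, ht]
    have h1 : ‖J g‖ ^ 2 ≤ ‖J‖ ^ 2 * ‖g‖ ^ 2 := by
      have := sq_le_sq' (by nlinarith [norm_nonneg (J g), norm_nonneg J, norm_nonneg g]) hJgle
      nlinarith
    have h3 : c ^ 2 * (‖J‖ ^ 2 + lam) = c := by
      rw [← hA, hc]; field_simp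
    nlinarith [mul_le_mul_of_nonneg_left h1 (sq_nonneg c), h3, sq_nonneg ‖g‖]
  have hmt := hmin ((-c) • g)
  have : θ 0 - θ sstar ≥ c * ‖g‖ ^ 2 := by linarith
  calc θ 0 - θ sstar ≥ c * ‖g‖ ^ 2 := this
    _ = ‖g‖ ^ 2 / A := by rw [hc]; ring
end

section
/- Let V be a finite-dimensional real inner product space, J : V → ℝ^m linear with adjoint J*, λ > 0, F ∈ ℝ^m, and g := J* F. If s ∈ V satisfies (J* ∘ J + λ·id)(s) = −g, then −⟨g, s⟩ ≥ ‖g‖² / (‖J‖² + λ). -/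
open RealInnerProductSpace

theorem stmt_3 {V : Type*} [NormedAddCommGroup V] [InnerProductSpace ℝ V]
    [FiniteDimensional ℝ V] {m : ℕ}
    (J : V →L[ℝ] EuclideanSpace ℝ (Fin m)) (lam : ℝ) (hlam : 0 < lam)
    (F : EuclideanSpace ℝ (Fin m)) (g : V)
    (hg : g = (ContinuousLinearMap.adjoint J) F)
    (s : V) (hs : (ContinuousLinearMap.adjoint J) (J s) + lam • s = -g) :
    -⟪g, s⟫ ≥ ‖g‖ ^ 2 / (‖J‖ ^ 2 + lam) := by
  have hpos : (0:ℝ) < ‖J‖ ^ 2 + lam := by positivity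
  have hadj : ⟪(ContinuousLinearMap.adjoint J) (J s), s⟫ = ‖J s‖ ^ 2 := by
    rw [ContinuousLinearMap.adjoint_inner_left, real_inner_self_eq_norm_sq]
  have h1 : -⟪g, s⟫ = ‖J s‖ ^ 2 + lam * ‖s‖ ^ 2 := by
    have := congrArg (fun x => ⟪x, s⟫) hs
    simp only [inner_add_left, inner_neg_left, real_inner_smul_left, hadj,
      real_inner_self_eq_norm_sq] at this
    linarith
  have h2 : ‖g‖ ^ 2 = ‖(ContinuousLinearMap.adjoint J) (J s)‖ ^ 2
      + 2 * lam * ‖J s‖ ^ 2 + lam ^ 2 * ‖s‖ ^ 2 := by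
    have : ‖g‖ = ‖(ContinuousLinearMap.adjoint J) (J s) + lam • s‖ := by
      rw [hs, norm_neg]
    rw [this, ← real_inner_self_eq_norm_sq, inner_add_add_self]
    have hadj2 : ⟪s, (ContinuousLinearMap.adjoint J) (J s)⟫ = ‖J s‖ ^ 2 := by
      rw [real_inner_comm]; exact hadj
    simp only [real_inner_smul_left, real_inner_smul_right, real_inner_self_eq_norm_sq,
      hadj, hadj2, norm_smul, Real.norm_eq_abs, mul_pow, sq_abs]
    ring
  have h3 : ‖(ContinuousLinearMap.adjoint J) (J s)‖ ≤ ‖J‖ * ‖J s‖ := by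
    have := (ContinuousLinearMap.adjoint J).le_opNorm (J s)
    rwa [ContinuousLinearMap.adjoint.norm_map] at this
  have h4 : ‖J s‖ ≤ ‖J‖ * ‖s‖ := J.le_opNorm s
  rw [ge_iff_le, div_le_iff₀ hpos, h1, h2]
  nlinarith [norm_nonneg (J s), norm_nonneg s, norm_nonneg J,
    norm_nonneg ((ContinuousLinearMap.adjoint J) (J s)),
    mul_le_mul h3 h3 (norm_nonneg _) (by positivity),
    mul_le_mul h4 h4 (norm_nonneg _) (by positivity)]
end

section
/- Let V be a finite-dimensional real inner product space, J : V → ℝ^m linear with adjoint J* and operator norm ‖J‖ ≤ M, λ > 0, F ∈ ℝ^m, g := J*F, and s the solution of (J*J + λ I)s = −g. If moreover f(y) ≤ f(x) + ⟨g, s⟩ + (L/2)‖s‖² holds (descent-type inequality with reals f(x), f(y), L > 0), and λ ≥ κ := (L/2 + √(L²/4 + 2(1−η)LM²))/(2(1−η)) with η ∈ (0,1), then f(x) − f(y) ≥ (η/2)(θ(0) − θ(s)), where θ(s) = ‖F + Js‖² + λ‖s‖². -/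
open RealInnerProductSpace

theorem stmt_15 {V : Type*} [NormedAddCommGroup V] [InnerProductSpace ℝ V]
    [FiniteDimensional ℝ V] {m : ℕ}
    (J : V →L[ℝ] EuclideanSpace ℝ (Fin m)) (M : ℝ) (hM : 0 < M)
    (hJM : ‖J‖ ≤ M) (lam : ℝ) (hlam : 0 < lam)
    (F : EuclideanSpace ℝ (Fin m)) (g : V)
    (hg : g = (ContinuousLinearMap.adjoint J) F)
    (s : V) (hs : (ContinuousLinearMap.adjoint J) (J s) + lam • s = -g)
    (fx fy L η : ℝ) (hL : 0 < L) (hη : η ∈ Set.Ioo (0 : ℝ) 1)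
    (hdesc : fy ≤ fx + ⟪g, s⟫ + L / 2 * ‖s‖ ^ 2)
    (κ : ℝ)
    (hκ : κ = (L / 2 + Real.sqrt (L ^ 2 / 4 + 2 * (1 - η) * L * M ^ 2)) /
      (2 * (1 - η)))
    (hlamκ : κ ≤ lam)
    (θ : V → ℝ) (hθ : ∀ t : V, θ t = ‖F + J t‖ ^ 2 + lam * ‖t‖ ^ 2) :
    fx - fy ≥ η / 2 * (θ 0 - θ s) := by
  obtain ⟨hη0, hη1⟩ := hη
  -- inner product identity from the normal equation
  have h1 : ⟪g, s⟫ = -(‖J s‖ ^ 2 + lam * ‖s‖ ^ 2) := by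
    have := congrArg (fun v => ⟪v, s⟫) hs
    simp only [inner_add_left, inner_smul_left, inner_neg_left,
      ContinuousLinearMap.adjoint_inner_left, real_inner_self_eq_norm_sq,
      RCLike.ofReal_real_eq_id, id, starRingEnd_apply, star_trivial] at this
    have hJs : ⟪J s, J s⟫ = ‖J s‖ ^ 2 := real_inner_self_eq_norm_sq _
    linarith [this]
  -- θ difference
  have h2 : θ 0 - θ s = ‖J s‖ ^ 2 + lam * ‖s‖ ^ 2 := by
    have hFs : ⟪F, J s⟫ = ⟪g, s⟫ := by
      rw [hg, ContinuousLinearMap.adjoint_inner_left]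
    have hnorm : ‖F + J s‖ ^ 2 = ‖F‖ ^ 2 + 2 * ⟪F, J s⟫ + ‖J s‖ ^ 2 := by
      rw [@norm_add_sq_real]
    rw [hθ 0, hθ s, hnorm, hFs, h1]
    simp only [map_zero, add_zero, norm_zero]
    ring
  -- κ bound: sqrt ≥ L/2
  have hsq : L / 2 ≤ Real.sqrt (L ^ 2 / 4 + 2 * (1 - η) * L * M ^ 2) := by
    rw [show L ^ 2 / 4 + 2 * (1 - η) * L * M ^ 2 =
      (L / 2) ^ 2 + 2 * (1 - η) * L * M ^ 2 by ring]
    have h0 : 0 < 2 * (1 - η) * L * M ^ 2 :=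
      mul_pos (mul_pos (by linarith : (0:ℝ) < 2 * (1 - η)) hL) (pow_pos hM 2)
    nlinarith [Real.sq_sqrt (by nlinarith [sq_nonneg (L/2)] : (0:ℝ) ≤ (L / 2) ^ 2 + 2 * (1 - η) * L * M ^ 2),
      Real.sqrt_nonneg ((L / 2) ^ 2 + 2 * (1 - η) * L * M ^ 2), hL.le]
  have hκL : L ≤ 2 * (1 - η) * κ := by
    have hpos : (0:ℝ) < 2 * (1 - η) := by linarith
    have hmul : 2 * (1 - η) * κ = L / 2 + Real.sqrt (L ^ 2 / 4 + 2 * (1 - η) * L * M ^ 2) := by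
      rw [hκ]; field_simp
    linarith
  have hlamL : L ≤ (2 - η) * lam := by nlinarith
  have hs2 : 0 ≤ ‖s‖ ^ 2 := by positivity
  have hJs2 : 0 ≤ ‖J s‖ ^ 2 := by positivity
  rw [h2]
  nlinarith [hdesc, h1]
end
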